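/- The rational function g(x) = (x³ + 2px²)/(p³ + p²x), where p = 1 + x + x²/4, attains its global maximum over x ≥ 0 at x = 2, with maximum value 5/12. -/
import Mathlib


noncomputable def g (x : ℝ) : ℝ :=
  let p : ℝ := 1 + x + x ^ 2 / 4
  (x ^ 3 + 2 * p * x ^ 2) / (p ^ 3 + p ^ 2 * x)

theorem stmt9 : (∀ x : ℝ, 0 ≤ x → g x ≤ 5 / 12) ∧ g 2 = 5 / 12 := by
  constructor
  · intro x hx
    show (x ^ 3 + 2 * (1 + x + x ^ 2 / 4) * x ^ 2) /
        ((1 + x + x ^ 2 / 4) ^ 3 + (1 + x + x ^ 2 / 4) ^ 2 * x) ≤ 5 / 12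
    have hp0 : 0 < 1 + x + x ^ 2 / 4 := by nlinarith [sq_nonneg x]
    have hd : 0 < (1 + x + x ^ 2 / 4) ^ 3 + (1 + x + x ^ 2 / 4) ^ 2 * x := by
      have h1 : 0 < (1 + x + x ^ 2 / 4) ^ 2 * ((1 + x + x ^ 2 / 4) + x) := by
        apply mul_pos (by positivity) (by linarith)
      nlinarith [h1]
    rw [div_le_iff₀ hd]
    nlinarith [sq_nonneg (x - 2), sq_nonneg x, mul_nonneg hx (sq_nonneg (x - 2)),
      mul_nonneg (mul_nonneg hx hx) (sq_nonneg (x - 2)),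
      mul_nonneg (mul_nonneg (mul_nonneg hx hx) hx) (sq_nonneg (x - 2)),
      mul_nonneg (mul_nonneg (mul_nonneg (mul_nonneg hx hx) hx) hx) (sq_nonneg (x - 2))]
  · show (2 ^ 3 + 2 * (1 + 2 + 2 ^ 2 / 4) * 2 ^ 2) /
        ((1 + 2 + (2:ℝ) ^ 2 / 4) ^ 3 + (1 + 2 + 2 ^ 2 / 4) ^ 2 * 2) = 5 / 12
    norm_num
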